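/- Let a > 0 and let H := L²(ℝ; ℂ). Let χ₊ and χ₋ be the bounded operators on H of multiplication by the indicator functions of (a,+∞) and of (−∞,−a) respectively, and let S : H → H be the reflection operator (Sψ)(t) = ψ(−t). Suppose D : H → H is a bounded linear operator and there exist bounded linear operators L, K : H → H such that D∘χ₊ = L + K, χ₊∘L∘χ₊ = L, χ₊∘K∘χ₊ = K, ‖L‖ ≤ 1/√2, K is compact, and in addition D∘χ₋ is compact. Define the bounded operator 𝔻 on H⁴ = H × H × H × H by (𝔻Φ)_j := D(S(Φ_{j+1 mod 4})) + S(D(Φ_{j−1 mod 4})) for j = 0,1,2,3. Then there exist bounded linear operators 𝕃 and 𝕂 on H⁴ with 𝕂 compact such that, for every Φ ∈ H⁴ all four of whose components vanish almost everywhere on (−a, a), one has 𝔻Φ = 𝕃Φ + 𝕂Φ and ‖𝕃Φ‖_{H⁴} ≤ (1/√2) ‖Φ‖_{H⁴}. -/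

import Mathlib

open MeasureTheory Set

/-- The Hilbert space `H = L²(ℝ; ℂ)`. -/
noncomputable abbrev Hsp : Type := Lp ℂ 2 (volume : Measure ℝ)

/-- `H⁴` with the Hilbert norm `‖Φ‖² = Σ_{j=0}^{3} ‖Φ_j‖²`. -/
noncomputable abbrev Hsp4 : Type := PiLp 2 (fun _ : Fin 4 => Hsp)

namespace Stmt16Aux

/-- The continuous linear map `Hsp → (Fin 4 → Hsp)` putting `x` in slot `j`. -/
noncomputable def embPi (j : Fin 4) : Hsp →L[ℂ] (Fin 4 → Hsp) :=
  ContinuousLinearMap.pi (fun i => if i = j then ContinuousLinearMap.id ℂ Hsp else 0)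

lemma embPi_apply (j : Fin 4) (x : Hsp) : embPi j x = Pi.single j x := by
  funext i
  by_cases h : i = j <;> simp [embPi, Pi.single_apply, h]

/-- Single block `Φ ↦ Pi.single i (T (Φ k))`. -/
noncomputable def blk (T : Hsp →L[ℂ] Hsp) (i k : Fin 4) :
    (Fin 4 → Hsp) →L[ℂ] (Fin 4 → Hsp) :=
  (embPi i).comp (T.comp (ContinuousLinearMap.proj k))

lemma blk_cpt {T : Hsp →L[ℂ] Hsp} (hT : IsCompactOperator T) (i k : Fin 4) :
    IsCompactOperator (blk T i k) := by
  have h1 : IsCompactOperator (⇑(embPi i) ∘ ⇑T) := hT.clm_comp (embPi i)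
  have h2 := h1.comp_clm
    (ContinuousLinearMap.proj k : (Fin 4 → Hsp) →L[ℂ] Hsp)
  simpa [blk, ContinuousLinearMap.coe_comp', Function.comp_def] using h2

noncomputable def blockPi (T₁ T₂ : Hsp →L[ℂ] Hsp) :
    (Fin 4 → Hsp) →L[ℂ] (Fin 4 → Hsp) :=
  ∑ i : Fin 4, (blk T₁ i (i + 1) + blk T₂ i (i - 1))

lemma blockPi_apply (T₁ T₂ : Hsp →L[ℂ] Hsp) (Φ : Fin 4 → Hsp) :
    blockPi T₁ T₂ Φ = fun j => T₁ (Φ (j + 1)) + T₂ (Φ (j - 1)) := by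
  have : blockPi T₁ T₂ Φ
      = ∑ i : Fin 4, Pi.single i (T₁ (Φ (i + 1)) + T₂ (Φ (i - 1))) := by
    rw [blockPi, ContinuousLinearMap.sum_apply]
    refine Finset.sum_congr rfl fun i _ => ?_
    simp [blk, embPi_apply]
    funext j
    by_cases h : j = i <;> simp [Pi.single_apply, h]
  rw [this, Finset.univ_sum_single (fun i => T₁ (Φ (i + 1)) + T₂ (Φ (i - 1)))]

lemma blockPi_cpt {T₁ T₂ : Hsp →L[ℂ] Hsp} (h₁ : IsCompactOperator T₁)
    (h₂ : IsCompactOperator T₂) : IsCompactOperator (blockPi T₁ T₂) := by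
  rw [blockPi]
  refine Finset.sum_induction _ (fun A : (Fin 4 → Hsp) →L[ℂ] (Fin 4 → Hsp) =>
    IsCompactOperator ⇑A) ?_ ?_ ?_
  · intro A B hA hB
    rw [ContinuousLinearMap.coe_add']
    exact hA.add hB
  · simp only [ContinuousLinearMap.coe_zero']
    exact isCompactOperator_zero
  · intro i _
    rw [ContinuousLinearMap.coe_add']
    exact (blk_cpt h₁ i (i + 1)).add (blk_cpt h₂ i (i - 1))

noncomputable def toPi : Hsp4 →L[ℂ] (Fin 4 → Hsp) :=
  (PiLp.continuousLinearEquiv 2 ℂ (fun _ : Fin 4 => Hsp)).toContinuousLinearMap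

noncomputable def ofPi : (Fin 4 → Hsp) →L[ℂ] Hsp4 :=
  ((PiLp.continuousLinearEquiv 2 ℂ (fun _ : Fin 4 => Hsp)).symm).toContinuousLinearMap

noncomputable def block (T₁ T₂ : Hsp →L[ℂ] Hsp) : Hsp4 →L[ℂ] Hsp4 :=
  ofPi.comp ((blockPi T₁ T₂).comp toPi)

lemma block_apply (T₁ T₂ : Hsp →L[ℂ] Hsp) (Φ : Hsp4) (j : Fin 4) :
    block T₁ T₂ Φ j = T₁ (Φ (j + 1)) + T₂ (Φ (j - 1)) :=
  congrFun (blockPi_apply T₁ T₂ (toPi Φ)) j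

lemma block_cpt {T₁ T₂ : Hsp →L[ℂ] Hsp} (h₁ : IsCompactOperator T₁)
    (h₂ : IsCompactOperator T₂) : IsCompactOperator (block T₁ T₂) := by
  have h := ((blockPi_cpt h₁ h₂).comp_clm toPi).clm_comp ofPi
  simpa [block, ContinuousLinearMap.coe_comp', Function.comp_def] using h

end Stmt16Aux


open Stmt16Aux

/-- Abstract block-operator decomposition (Appendix A of the paper): if
`D∘χ₊ = L + K` with `χ₊ L χ₊ = L`, `χ₊ K χ₊ = K`, `‖L‖ ≤ 1/√2`, `K` compact, and
`D∘χ₋` compact, then the block operator `𝔻`, `(𝔻Φ)_j = D S Φ_{j+1} + S D Φ_{j-1}`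
(indices mod 4), decomposes on the subspace of `Φ` vanishing a.e. on `(−a,a)` as
`𝕃 + 𝕂` with `𝕂` compact and `‖𝕃Φ‖ ≤ (1/√2)‖Φ‖`. -/
theorem stmt_16 (a : ℝ) (ha : 0 < a)
    (χp χm S D L K : Hsp →L[ℂ] Hsp)
    (hχp : ∀ φ : Hsp, (χp φ : ℝ → ℂ) =ᵐ[volume] (Set.Ioi a).indicator (φ : ℝ → ℂ))
    (hχm : ∀ φ : Hsp, (χm φ : ℝ → ℂ) =ᵐ[volume] (Set.Iio (-a)).indicator (φ : ℝ → ℂ))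
    (hS : ∀ φ : Hsp, (S φ : ℝ → ℂ) =ᵐ[volume] fun t => (φ : ℝ → ℂ) (-t))
    (hDχp : D.comp χp = L + K)
    (hL : χp.comp (L.comp χp) = L)
    (hK : χp.comp (K.comp χp) = K)
    (hLnorm : ‖L‖ ≤ 1 / Real.sqrt 2)
    (hKcpt : IsCompactOperator K)
    (hDχm : IsCompactOperator (D.comp χm)) :
    ∃ 𝕃 𝕂 : Hsp4 →L[ℂ] Hsp4, IsCompactOperator 𝕂 ∧
      ∀ Φ : Hsp4,
        (∀ j : Fin 4, ∀ᵐ t ∂(volume : Measure ℝ),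
          t ∈ Set.Ioo (-a) a → (Φ j : ℝ → ℂ) t = 0) →
        (∀ j : Fin 4, D (S (Φ (j + 1))) + S (D (Φ (j - 1))) = 𝕃 Φ j + 𝕂 Φ j) ∧
        ‖𝕃 Φ‖ ≤ (1 / Real.sqrt 2) * ‖Φ‖ := by
  classical
  -- The reflection is norm-preserving.
  have hmp : MeasurePreserving (fun t : ℝ => -t) volume volume :=
    Measure.measurePreserving_neg _
  have hSnorm : ∀ φ : Hsp, ‖S φ‖ = ‖φ‖ := by
    intro φ
    have h1 : eLpNorm (S φ : ℝ → ℂ) 2 volume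
        = eLpNorm ((φ : ℝ → ℂ) ∘ (fun t : ℝ => -t)) 2 volume :=
      eLpNorm_congr_ae (hS φ)
    have h2 : eLpNorm ((φ : ℝ → ℂ) ∘ (fun t : ℝ => -t)) 2 volume
        = eLpNorm (φ : ℝ → ℂ) 2 volume :=
      eLpNorm_comp_measurePreserving (Lp.aestronglyMeasurable φ) hmp
    rw [Lp.norm_def, Lp.norm_def, h1, h2]
  -- `L ψ` is supported in `(a, ∞)`.
  have hLsupp : ∀ ψ : Hsp, (L ψ : ℝ → ℂ)
      =ᵐ[volume] (Set.Ioi a).indicator ((L (χp ψ) : ℝ → ℂ)) := by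
    intro ψ
    have h0 : χp (L (χp ψ)) = L ψ := ContinuousLinearMap.ext_iff.1 hL ψ
    calc (L ψ : ℝ → ℂ) =ᵐ[volume] (χp (L (χp ψ)) : ℝ → ℂ) := by rw [h0]
      _ =ᵐ[volume] (Set.Ioi a).indicator ((L (χp ψ) : ℝ → ℂ)) := hχp _
  -- Orthogonality: `L ψ ⟂ S (L φ)`.
  have horth : ∀ ψ φ : Hsp, (inner ℂ (L ψ) (S (L φ)) : ℂ) = 0 := by
    intro ψ φ
    have h1 := hLsupp ψ
    have h2 : (S (L φ) : ℝ → ℂ) =ᵐ[volume]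
        fun t => (Set.Ioi a).indicator ((L (χp φ) : ℝ → ℂ)) (-t) := by
      refine (hS (L φ)).trans ?_
      have := hmp.quasiMeasurePreserving.ae_eq (hLsupp φ)
      exact this
    have hzero : (fun t => (inner ℂ ((L ψ : ℝ → ℂ) t) ((S (L φ) : ℝ → ℂ) t) : ℂ))
        =ᵐ[volume] (fun _ => (0 : ℂ)) := by
      filter_upwards [h1, h2] with t e1 e2
      rw [e1, e2]
      by_cases ht : t ∈ Set.Ioi a
      · have hnt : (-t) ∉ Set.Ioi a := by
          simp only [Set.mem_Ioi] at ht ⊢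
          linarith
        rw [Set.indicator_of_notMem hnt]
        simp
      · rw [Set.indicator_of_notMem ht]
        simp
    rw [L2.inner_def, integral_congr_ae hzero, integral_zero]
  -- Splitting of functions vanishing on `(-a, a)`.
  have hsplit : ∀ φ : Hsp,
      (∀ᵐ t ∂(volume : Measure ℝ), t ∈ Set.Ioo (-a) a → (φ : ℝ → ℂ) t = 0) →
      φ = χp φ + χm φ := by
    intro φ hv
    refine Lp.ext ?_
    have hcoe : ((χp φ + χm φ : Hsp) : ℝ → ℂ)
        =ᵐ[volume] (χp φ : ℝ → ℂ) + (χm φ : ℝ → ℂ) := Lp.coeFn_add _ _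
    have hedge : ∀ᵐ t ∂(volume : Measure ℝ), t ≠ a ∧ t ≠ -a := by
      have hz : volume ({a, -a} : Set ℝ) = 0 :=
        (Set.toFinite ({a, -a} : Set ℝ)).measure_zero _
      have := measure_mono_null (fun t (ht : ¬(t ≠ a ∧ t ≠ -a)) => by
        push_neg at ht
        by_cases h : t = a
        · exact Set.mem_insert_iff.2 (Or.inl h)
        · exact Set.mem_insert_iff.2 (Or.inr (by simpa using ht h))) hz
      exact this
    filter_upwards [hv, hχp φ, hχm φ, hcoe, hedge] with t h0 h1 h2 h3 he
    rw [h3, Pi.add_apply, h1, h2]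
    by_cases hp : t ∈ Set.Ioi a
    · rw [Set.indicator_of_mem hp, Set.indicator_of_notMem
        (by simp only [Set.mem_Iio]; simp only [Set.mem_Ioi] at hp; linarith), add_zero]
    · by_cases hm : t ∈ Set.Iio (-a)
      · rw [Set.indicator_of_mem hm, Set.indicator_of_notMem hp, zero_add]
      · rw [Set.indicator_of_notMem hp, Set.indicator_of_notMem hm, add_zero]
        simp only [Set.mem_Ioi, not_lt] at hp
        simp only [Set.mem_Iio, not_lt] at hm
        refine h0 ?_
        constructor
        · rcases lt_or_eq_of_le hm with h | h
          · exact h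
          · exact absurd h.symm he.2
        · rcases lt_or_eq_of_le hp with h | h
          · exact h
          · exact absurd h he.1
  -- vanishing transfers through `S`
  have hSvan : ∀ φ : Hsp,
      (∀ᵐ t ∂(volume : Measure ℝ), t ∈ Set.Ioo (-a) a → (φ : ℝ → ℂ) t = 0) →
      (∀ᵐ t ∂(volume : Measure ℝ), t ∈ Set.Ioo (-a) a → (S φ : ℝ → ℂ) t = 0) := by
    intro φ hv
    have h1 : ∀ᵐ t ∂(volume : Measure ℝ),
        (-t) ∈ Set.Ioo (-a) a → (φ : ℝ → ℂ) (-t) = 0 :=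
      hmp.quasiMeasurePreserving.ae hv
    filter_upwards [h1, hS φ] with t e1 e2 ht
    rw [e2]
    refine e1 ?_
    simp only [Set.mem_Ioo] at ht ⊢
    constructor <;> linarith
  -- `χp` is idempotent
  have hχp2 : ∀ φ : Hsp, χp (χp φ) = χp φ := by
    intro φ
    refine Lp.ext ?_
    filter_upwards [hχp (χp φ), hχp φ] with t h1 h2
    rw [h1]
    by_cases ht : t ∈ Set.Ioi a
    · rw [Set.indicator_of_mem ht]
    · rw [Set.indicator_of_notMem ht, h2, Set.indicator_of_notMem ht]
  have hLchp : ∀ ψ : Hsp, L (χp ψ) = L ψ := by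
    intro ψ
    calc L (χp ψ) = χp (L (χp (χp ψ))) := (ContinuousLinearMap.ext_iff.1 hL (χp ψ)).symm
      _ = χp (L (χp ψ)) := by rw [hχp2 ψ]
      _ = L ψ := ContinuousLinearMap.ext_iff.1 hL ψ
  -- `χp ∘ S = S ∘ χm`
  have hχpS : ∀ φ : Hsp, χp (S φ) = S (χm φ) := by
    intro φ
    refine Lp.ext ?_
    have hm' : (fun t : ℝ => (χm φ : ℝ → ℂ) (-t)) =ᵐ[volume]
        (fun t : ℝ => (Set.Iio (-a)).indicator ((φ : ℝ → ℂ)) (-t)) :=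
      hmp.quasiMeasurePreserving.ae_eq (hχm φ)
    filter_upwards [hχp (S φ), hS φ, hS (χm φ), hm'] with t h1 h2 h3 h4
    rw [h1, h3, h4]
    by_cases ht : t ∈ Set.Ioi a
    · have hmt : (-t) ∈ Set.Iio (-a) := by
        simp only [Set.mem_Ioi] at ht
        simp only [Set.mem_Iio]
        linarith
      rw [Set.indicator_of_mem ht, Set.indicator_of_mem hmt, h2]
    · have hmt : (-t) ∉ Set.Iio (-a) := by
        simp only [Set.mem_Ioi, not_lt] at ht
        simp only [Set.mem_Iio, not_lt]
        linarith
      rw [Set.indicator_of_notMem ht, Set.indicator_of_notMem hmt]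
  -- `χp φ ⟂ χm φ`
  have hinner_pm : ∀ φ : Hsp, (inner ℂ (χp φ) (χm φ) : ℂ) = 0 := by
    intro φ
    have hzero : (fun t => (inner ℂ ((χp φ : ℝ → ℂ) t) ((χm φ : ℝ → ℂ) t) : ℂ))
        =ᵐ[volume] (fun _ => (0 : ℂ)) := by
      filter_upwards [hχp φ, hχm φ] with t e1 e2
      rw [e1, e2]
      by_cases ht : t ∈ Set.Ioi a
      · have hnt : t ∉ Set.Iio (-a) := by
          simp only [Set.mem_Ioi] at ht
          simp only [Set.mem_Iio, not_lt]
          linarith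
        rw [Set.indicator_of_notMem hnt]
        simp
      · rw [Set.indicator_of_notMem ht]
        simp
    rw [L2.inner_def, integral_congr_ae hzero, integral_zero]
  have hnormsplit : ∀ φ : Hsp,
      (∀ᵐ t ∂(volume : Measure ℝ), t ∈ Set.Ioo (-a) a → (φ : ℝ → ℂ) t = 0) →
      ‖φ‖ ^ 2 = ‖χp φ‖ ^ 2 + ‖χm φ‖ ^ 2 := by
    intro φ hvφ
    have h0 := norm_add_sq_eq_norm_sq_add_norm_sq_of_inner_eq_zero
      (𝕜 := ℂ) (χp φ) (χm φ) (hinner_pm φ)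
    calc ‖φ‖ ^ 2 = ‖χp φ + χm φ‖ ^ 2 := by rw [← hsplit φ hvφ]
      _ = ‖χp φ‖ ^ 2 + ‖χm φ‖ ^ 2 := by rw [sq, h0, ← sq, ← sq]
  -- The operators
  refine ⟨block (L.comp S) (S.comp L),
    block ((K.comp S) + ((D.comp χm).comp S)) (S.comp (K + D.comp χm)), ?_, ?_⟩
  · -- compactness
    refine block_cpt ?_ ?_
    · rw [ContinuousLinearMap.coe_add']
      refine IsCompactOperator.add ?_ ?_
      · have := hKcpt.comp_clm S
        simpa [ContinuousLinearMap.coe_comp', Function.comp_def] using this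
      · have := hDχm.comp_clm S
        simpa [ContinuousLinearMap.coe_comp', Function.comp_def] using this
    · have hsum : IsCompactOperator (K + D.comp χm : Hsp →L[ℂ] Hsp) := by
        rw [ContinuousLinearMap.coe_add']
        exact hKcpt.add hDχm
      have := hsum.clm_comp S
      exact this
  intro Φ hv
  constructor
  · -- the identity
    intro j
    rw [block_apply, block_apply]
    have hvp := hSvan _ (hv (j + 1))
    have e1 : S (Φ (j + 1)) = χp (S (Φ (j + 1))) + χm (S (Φ (j + 1))) := hsplit _ hvp
    have e2 : Φ (j - 1) = χp (Φ (j - 1)) + χm (Φ (j - 1)) := hsplit _ (hv (j - 1))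
    have hD1 : ∀ ψ : Hsp, D (χp ψ) = L ψ + K ψ := by
      intro ψ
      have := ContinuousLinearMap.ext_iff.1 hDχp ψ
      simpa using this
    calc D (S (Φ (j + 1))) + S (D (Φ (j - 1)))
        = D (χp (S (Φ (j + 1))) + χm (S (Φ (j + 1))))
          + S (D (χp (Φ (j - 1)) + χm (Φ (j - 1)))) := by rw [← e1, ← e2]
      _ = (L (S (Φ (j + 1))) + K (S (Φ (j + 1))) + D (χm (S (Φ (j + 1)))))
          + S (L (Φ (j - 1)) + K (Φ (j - 1)) + D (χm (Φ (j - 1)))) := by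
            rw [map_add, map_add, hD1, hD1]
      _ = _ := by
            simp only [ContinuousLinearMap.comp_apply, ContinuousLinearMap.add_apply,
              map_add]
            abel
  · -- the norm estimate
    have hL2 : ‖L‖ * ‖L‖ ≤ 1 / 2 := by
      have h2 : Real.sqrt 2 * Real.sqrt 2 = 2 :=
        Real.mul_self_sqrt (by norm_num)
      have := mul_self_le_mul_self (norm_nonneg L) hLnorm
      calc ‖L‖ * ‖L‖ ≤ (1 / Real.sqrt 2) * (1 / Real.sqrt 2) := this
        _ = 1 / 2 := by
          rw [div_mul_div_comm, one_mul, h2]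
    have hsq : ‖block (L.comp S) (S.comp L) Φ‖ ^ 2 ≤ ((1 / Real.sqrt 2) * ‖Φ‖) ^ 2 := by
      rw [PiLp.norm_sq_eq_of_L2]
      have hterm : ∀ j : Fin 4, ‖block (L.comp S) (S.comp L) Φ j‖ ^ 2
          ≤ ‖L‖ ^ 2 * ‖χm (Φ (j + 1))‖ ^ 2 + ‖L‖ ^ 2 * ‖χp (Φ (j - 1))‖ ^ 2 := by
        intro j
        rw [block_apply]
        have horto := horth (S (Φ (j + 1))) (Φ (j - 1))
        have hpyth := norm_add_sq_eq_norm_sq_add_norm_sq_of_inner_eq_zero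
          (𝕜 := ℂ) (L (S (Φ (j + 1)))) (S (L (Φ (j - 1)))) horto
        simp only [ContinuousLinearMap.comp_apply]
        rw [sq, hpyth]
        have b1 : ‖L (S (Φ (j + 1)))‖ ≤ ‖L‖ * ‖χm (Φ (j + 1))‖ := by
          calc ‖L (S (Φ (j + 1)))‖ = ‖L (χp (S (Φ (j + 1))))‖ := by rw [hLchp]
            _ = ‖L (S (χm (Φ (j + 1))))‖ := by rw [hχpS]
            _ ≤ ‖L‖ * ‖S (χm (Φ (j + 1)))‖ := L.le_opNorm _
            _ = ‖L‖ * ‖χm (Φ (j + 1))‖ := by rw [hSnorm]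
        have b2 : ‖S (L (Φ (j - 1)))‖ ≤ ‖L‖ * ‖χp (Φ (j - 1))‖ := by
          calc ‖S (L (Φ (j - 1)))‖ = ‖L (Φ (j - 1))‖ := hSnorm _
            _ = ‖L (χp (Φ (j - 1)))‖ := by rw [hLchp]
            _ ≤ ‖L‖ * ‖χp (Φ (j - 1))‖ := L.le_opNorm _
        have n1 := norm_nonneg (L (S (Φ (j + 1))))
        have n2 := norm_nonneg (S (L (Φ (j - 1))))
        nlinarith [norm_nonneg (χm (Φ (j + 1))), norm_nonneg (χp (Φ (j - 1))),
          norm_nonneg L]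
      have hsum1 : ∑ j : Fin 4, ‖χm (Φ (j + 1))‖ ^ 2 = ∑ j : Fin 4, ‖χm (Φ j)‖ ^ 2 :=
        Fintype.sum_equiv (Equiv.addRight (1 : Fin 4)) _ _ (fun j => rfl)
      have hsum2 : ∑ j : Fin 4, ‖χp (Φ (j - 1))‖ ^ 2 = ∑ j : Fin 4, ‖χp (Φ j)‖ ^ 2 :=
        Fintype.sum_equiv (Equiv.subRight (1 : Fin 4)) _ _ (fun j => rfl)
      have hΦ : ∑ j : Fin 4, ‖Φ j‖ ^ 2 = ‖Φ‖ ^ 2 := (PiLp.norm_sq_eq_of_L2 _ Φ).symm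
      calc ∑ j : Fin 4, ‖block (L.comp S) (S.comp L) Φ j‖ ^ 2
          ≤ ∑ j : Fin 4, (‖L‖ ^ 2 * ‖χm (Φ (j + 1))‖ ^ 2
              + ‖L‖ ^ 2 * ‖χp (Φ (j - 1))‖ ^ 2) :=
            Finset.sum_le_sum (fun j _ => hterm j)
        _ = ‖L‖ ^ 2 * (∑ j : Fin 4, ‖χm (Φ (j + 1))‖ ^ 2)
            + ‖L‖ ^ 2 * (∑ j : Fin 4, ‖χp (Φ (j - 1))‖ ^ 2) := by
            rw [Finset.sum_add_distrib, Finset.mul_sum, Finset.mul_sum]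
        _ = ‖L‖ ^ 2 * (∑ j : Fin 4, (‖χp (Φ j)‖ ^ 2 + ‖χm (Φ j)‖ ^ 2)) := by
            rw [hsum1, hsum2, Finset.sum_add_distrib]
            ring
        _ = ‖L‖ ^ 2 * ‖Φ‖ ^ 2 := by
            rw [← hΦ]
            congr 1
            refine Finset.sum_congr rfl fun j _ => ?_
            rw [hnormsplit (Φ j) (hv j)]
        _ ≤ ((1 / Real.sqrt 2) * ‖Φ‖) ^ 2 := by
            have h2 : Real.sqrt 2 ^ 2 = 2 := Real.sq_sqrt (by norm_num)
            have heq : ((1 / Real.sqrt 2) * ‖Φ‖) ^ 2 = (1 / 2) * ‖Φ‖ ^ 2 := by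
              rw [mul_pow, div_pow, one_pow, h2]
            rw [heq]
            nlinarith [sq_nonneg ‖Φ‖, hL2, sq_nonneg ‖L‖]
    have h1 : (0 : ℝ) ≤ (1 / Real.sqrt 2) * ‖Φ‖ := by positivity
    have := Real.sqrt_le_sqrt hsq
    rwa [Real.sqrt_sq (norm_nonneg _), Real.sqrt_sq h1] at this
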